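/- Let d ≥ 1 be an integer and z ∈ ℝ^d. Then the average of cos⟨u, z⟩ over the unit sphere equals the Bessel-type power series: ∫_{S^{d−1}} cos⟨u, z⟩ dσ_{d−1}(u) = Σ_{k=0}^∞ (−1)^k ‖z‖^{2k} · Γ(d/2) / (4^k · k! · Γ(k + d/2)). -/

import Mathlib

open MeasureTheory

noncomputable section

/-- The restriction of a linear isometric equivalence of `ℝ^d` to the unit sphere. -/
def sphereMap (d : ℕ) (f : EuclideanSpace ℝ (Fin d) ≃ₗᵢ[ℝ] EuclideanSpace ℝ (Fin d))
    (x : Metric.sphere (0 : EuclideanSpace ℝ (Fin d)) 1) :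
    Metric.sphere (0 : EuclideanSpace ℝ (Fin d)) 1 :=
  ⟨f x.1, by
    have hx : ‖(x : EuclideanSpace ℝ (Fin d))‖ = 1 := by
      simp [mem_sphere_zero_iff_norm.mp x.2]
    exact mem_sphere_zero_iff_norm.mpr (by rw [f.norm_map, hx])⟩

section Aux

open Real
open scoped RealInnerProductSpace

/-- `Γ(k + 1/2)` in closed form. -/
lemma SphereAvgAux.gamma_nat_add_half (k : ℕ) :
    Real.Gamma ((k : ℝ) + 1/2) = (2*k).factorial / (4^k * k.factorial) * Real.sqrt π := by
  induction k with
  | zero =>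
    rw [show ((0:ℕ):ℝ) + 1/2 = 1/2 by norm_num, Real.Gamma_one_half_eq]
    simp
  | succ n ih =>
    have h : ((n:ℝ)+1) + 1/2 = ((n:ℝ) + 1/2) + 1 := by ring
    push_cast
    rw [h, Real.Gamma_add_one (by positivity), ih]
    have hfn : (0:ℝ) < n.factorial := by positivity
    push_cast [Nat.factorial_succ, Nat.mul_succ, Nat.factorial_succ]
    field_simp
    ring

/-- One-dimensional Gaussian moments. -/
lemma SphereAvgAux.oned_moment (k : ℕ) :
    ∫ t : ℝ, t ^ (2*k) * Real.exp (-t^2) = Real.Gamma ((k:ℝ) + 1/2) := by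
  have h1 : ∫ t : ℝ, t ^ (2*k) * Real.exp (-t^2)
      = 2 * ∫ t in Set.Ioi (0:ℝ), t ^ (2*k) * Real.exp (-t^2) := by
    rw [← integral_comp_abs (f := fun t : ℝ => t ^ (2*k) * Real.exp (-t^2))]
    congr 1 with t
    rw [pow_mul, pow_mul, sq_abs]
  have hq : (-1:ℝ) < ((2*k : ℕ) : ℝ) :=
    lt_of_lt_of_le neg_one_lt_zero (by positivity)
  have h2 : ∫ t in Set.Ioi (0:ℝ), t ^ (2*k) * Real.exp (-t^2)
      = (1/2) * Real.Gamma ((((2*k:ℕ):ℝ)+1)/2) := by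
    rw [← integral_rpow_mul_exp_neg_rpow two_pos hq]
    refine setIntegral_congr_fun measurableSet_Ioi (fun t ht => ?_)
    rw [Real.rpow_natCast, Real.rpow_two]
  rw [h1, h2, show ((((2*k:ℕ):ℝ))+1)/2 = (k:ℝ) + 1/2 by push_cast; ring]
  ring

variable {d : ℕ}

/-- Integrability of the Gaussian with variance parameter `1/2` on `ℝ^d`. -/
lemma SphereAvgAux.gauss_half_integrable :
    Integrable (fun x : EuclideanSpace ℝ (Fin d) => Real.exp (-(1/2) * ‖x‖^2)) := by
  have h := (GaussianFourier.integrable_cexp_neg_mul_sq_norm_add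
    (V := EuclideanSpace ℝ (Fin d)) (b := (1/2 : ℂ)) (by norm_num) 0 0).norm
  refine h.congr (Filter.Eventually.of_forall fun x => ?_)
  simp only [Complex.norm_exp]
  congr 1
  simp [Complex.add_re, Complex.mul_re, ← Complex.ofReal_pow]

/-- Pointwise bound for polynomial times Gaussian. -/
lemma SphereAvgAux.poly_gauss_bound (k : ℕ) (t : ℝ) :
    t ^ (2*k) * Real.exp (-t^2) ≤ 2^k * k.factorial * Real.exp (-(1/2) * t^2) := by
  have h1 : (t^2/2)^k / k.factorial ≤ Real.exp (t^2/2) := by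
    calc (t^2/2)^k / k.factorial ≤ ∑ i ∈ Finset.range (k+1), (t^2/2)^i / i.factorial := by
          exact Finset.single_le_sum (f := fun i => (t^2/2)^i / (i.factorial:ℝ))
            (fun i _ => by positivity) (Finset.self_mem_range_succ k)
      _ ≤ Real.exp (t^2/2) := Real.sum_le_exp_of_nonneg (by positivity) _
  have h2 : t ^ (2*k) ≤ 2^k * k.factorial * Real.exp (t^2/2) := by
    calc t ^ (2*k) = 2^k * k.factorial * ((t^2/2)^k / k.factorial) := by
          have hf : (k.factorial : ℝ) ≠ 0 := Nat.cast_ne_zero.mpr k.factorial_ne_zero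
          rw [pow_mul, div_pow]
          field_simp
      _ ≤ 2^k * k.factorial * Real.exp (t^2/2) :=
          mul_le_mul_of_nonneg_left h1 (by positivity)
  calc t ^ (2*k) * Real.exp (-t^2) ≤ (2^k * k.factorial * Real.exp (t^2/2)) * Real.exp (-t^2) :=
        mul_le_mul_of_nonneg_right h2 (Real.exp_pos _).le
    _ = 2^k * k.factorial * Real.exp (-(1/2) * t^2) := by
        rw [mul_assoc, ← Real.exp_add]; ring_nf

/-- Gaussian moment of a single coordinate on `ℝ^d`. -/
lemma SphereAvgAux.euclid_gauss_moment (hd : 1 ≤ d) (k : ℕ) :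
    ∫ x : EuclideanSpace ℝ (Fin d), (x (⟨0, hd⟩ : Fin d)) ^ (2*k) * Real.exp (-‖x‖^2)
      = Real.Gamma ((k:ℝ)+1/2) * Real.sqrt π ^ (d-1) := by
  set i0 : Fin d := ⟨0, hd⟩
  have hmp := (EuclideanSpace.volume_preserving_symm_measurableEquiv_toLp (Fin d)).symm
  rw [← hmp.integral_comp (MeasurableEquiv.measurableEmbedding _)
    (fun x : EuclideanSpace ℝ (Fin d) => (x i0) ^ (2*k) * Real.exp (-‖x‖^2))]
  have key : ∀ y : Fin d → ℝ,
      (((MeasurableEquiv.toLp 2 (Fin d → ℝ)).symm.symm y) i0) ^ (2*k) *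
        Real.exp (-‖(MeasurableEquiv.toLp 2 (Fin d → ℝ)).symm.symm y‖^2)
      = ∏ i, ((if i = i0 then (y i)^(2*k) else 1) * Real.exp (-(y i)^2)) := by
    intro y
    have hcoord : ∀ i, ((MeasurableEquiv.toLp 2 (Fin d → ℝ)).symm.symm y) i = y i := fun i => rfl
    have hnorm : ‖(MeasurableEquiv.toLp 2 (Fin d → ℝ)).symm.symm y‖^2 = ∑ i, (y i)^2 := by
      rw [EuclideanSpace.norm_eq, Real.sq_sqrt (by positivity)]
      simp [hcoord, sq_abs]
    rw [Finset.prod_mul_distrib, hnorm, hcoord]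
    rw [Finset.prod_ite_eq' Finset.univ i0 (fun i => (y i)^(2*k))]
    rw [← Real.exp_sum]
    simp [Finset.sum_neg_distrib]
  simp_rw [key]
  rw [MeasureTheory.integral_fintype_prod_volume_eq_prod (ι := Fin d)
    (f := fun i (t:ℝ) => (if i = i0 then t^(2*k) else 1) * Real.exp (-t^2))]
  have hfac : ∀ i : Fin d, (∫ t : ℝ, (if i = i0 then t^(2*k) else 1) * Real.exp (-t^2))
      = if i = i0 then Real.Gamma ((k:ℝ)+1/2) else Real.sqrt π := by
    intro i
    by_cases h : i = i0
    · simp only [h, if_true]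
      exact SphereAvgAux.oned_moment k
    · simp only [h, if_false, one_mul]
      have := integral_gaussian 1
      simp only [one_mul, neg_mul] at this
      rw [show (fun t : ℝ => Real.exp (-t^2)) = fun t : ℝ => Real.exp (-(1*t^2)) by
        funext t; ring_nf]
      simpa using this
  rw [Finset.prod_congr rfl (fun i _ => hfac i)]
  rw [← Finset.mul_prod_erase Finset.univ _ (Finset.mem_univ i0)]
  simp only [if_true]
  have : ∀ i ∈ Finset.univ.erase i0, (if i = i0 then Real.Gamma ((k:ℝ)+1/2) else Real.sqrt π)
      = Real.sqrt π := by
    intro i hi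
    rw [if_neg (Finset.ne_of_mem_erase hi)]
  rw [Finset.prod_congr rfl this, Finset.prod_const, Finset.card_erase_of_mem (Finset.mem_univ _),
    Finset.card_univ, Fintype.card_fin]

/-- Gaussian moment of the norm on `ℝ^d`. -/
lemma SphereAvgAux.euclid_gauss_radial (hd : 1 ≤ d) (k : ℕ) :
    ∫ x : EuclideanSpace ℝ (Fin d), ‖x‖^(2*k) * Real.exp (-‖x‖^2)
      = ((d : ℝ) * (volume (Metric.ball (0:EuclideanSpace ℝ (Fin d)) 1)).toReal)
        * ((1/2) * Real.Gamma ((k:ℝ) + d/2)) := by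
  haveI : Nontrivial (EuclideanSpace ℝ (Fin d)) := by
    refine ⟨EuclideanSpace.single (⟨0, hd⟩ : Fin d) (1:ℝ), 0, fun h => ?_⟩
    have := congrArg norm h
    rw [EuclideanSpace.norm_single, norm_zero] at this
    norm_num at this
  have h := MeasureTheory.integral_fun_norm_addHaar (volume : Measure (EuclideanSpace ℝ (Fin d)))
    (fun r => r^(2*k) * Real.exp (-r^2))
  rw [h, finrank_euclideanSpace_fin]
  have hinner : ∫ y in Set.Ioi (0:ℝ), y ^ (d - 1) • (y^(2*k) * Real.exp (-y^2))
      = (1/2) * Real.Gamma ((k:ℝ) + d/2) := by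
    have hq : (-1:ℝ) < ((d - 1 + 2*k : ℕ) : ℝ) :=
      lt_of_lt_of_le neg_one_lt_zero (by positivity)
    have h2 : ∫ y in Set.Ioi (0:ℝ), y ^ (d - 1) • (y^(2*k) * Real.exp (-y^2))
        = ∫ y in Set.Ioi (0:ℝ), y ^ (((d - 1 + 2*k : ℕ):ℝ)) * Real.exp (-y ^ (2:ℝ)) := by
      refine setIntegral_congr_fun measurableSet_Ioi (fun y hy => ?_)
      rw [smul_eq_mul, Real.rpow_natCast, Real.rpow_two, pow_add]
      ring
    rw [h2, integral_rpow_mul_exp_neg_rpow two_pos hq]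
    have hc : (((d - 1 + 2*k : ℕ):ℝ) + 1)/2 = (k:ℝ) + d/2 := by
      have : ((d - 1 + 2*k : ℕ):ℝ) = (d:ℝ) - 1 + 2*k := by
        push_cast [Nat.cast_sub hd]
        ring
      rw [this]; ring
    rw [hc]
  rw [hinner]
  simp only [nsmul_eq_mul, smul_eq_mul, measureReal_def]
  ring

lemma SphereAvgAux.continuous_sphereMap
    (f : EuclideanSpace ℝ (Fin d) ≃ₗᵢ[ℝ] EuclideanSpace ℝ (Fin d)) :
    Continuous (sphereMap d f) :=
  Continuous.subtype_mk (f.continuous.comp continuous_subtype_val) _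

lemma SphereAvgAux.integral_sphereMap
    (σ : Measure (Metric.sphere (0 : EuclideanSpace ℝ (Fin d)) 1))
    (hinv : ∀ f : EuclideanSpace ℝ (Fin d) ≃ₗᵢ[ℝ] EuclideanSpace ℝ (Fin d),
      σ.map (sphereMap d f) = σ)
    (f : EuclideanSpace ℝ (Fin d) ≃ₗᵢ[ℝ] EuclideanSpace ℝ (Fin d))
    (g : Metric.sphere (0 : EuclideanSpace ℝ (Fin d)) 1 → ℝ) (hg : Continuous g) :
    ∫ u, g (sphereMap d f u) ∂σ = ∫ u, g u ∂σ := by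
  conv_rhs => rw [← hinv f]
  rw [integral_map (SphereAvgAux.continuous_sphereMap f).aemeasurable
    (hg.aestronglyMeasurable.mono_ac (by rw [hinv f]))]

lemma SphereAvgAux.integral_inner_rot
    (σ : Measure (Metric.sphere (0 : EuclideanSpace ℝ (Fin d)) 1))
    (hinv : ∀ f : EuclideanSpace ℝ (Fin d) ≃ₗᵢ[ℝ] EuclideanSpace ℝ (Fin d),
      σ.map (sphereMap d f) = σ)
    (a b : EuclideanSpace ℝ (Fin d)) (hab : ‖a‖ = ‖b‖) (F : ℝ → ℝ) (hF : Continuous F) :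
    ∫ u, F ⟪(u : EuclideanSpace ℝ (Fin d)), a⟫ ∂σ
      = ∫ u, F ⟪(u : EuclideanSpace ℝ (Fin d)), b⟫ ∂σ := by
  let f := Submodule.reflection (ℝ ∙ (b - a))ᗮ
  have hfb : f b = a := Submodule.reflection_sub hab.symm
  have h := SphereAvgAux.integral_sphereMap σ hinv f
    (fun u => F ⟪(u : EuclideanSpace ℝ (Fin d)), a⟫)
    (hF.comp (continuous_subtype_val.inner continuous_const))
  have h2 : ∀ u : Metric.sphere (0 : EuclideanSpace ℝ (Fin d)) 1,
      F ⟪((sphereMap d f u) : EuclideanSpace ℝ (Fin d)), a⟫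
        = F ⟪(u : EuclideanSpace ℝ (Fin d)), b⟫ := by
    intro u
    congr 1
    calc ⟪(f (u : EuclideanSpace ℝ (Fin d))), a⟫
        = ⟪f (u : EuclideanSpace ℝ (Fin d)), f b⟫ := by rw [hfb]
      _ = ⟪(u : EuclideanSpace ℝ (Fin d)), b⟫ := f.inner_map_map _ _
  rw [← h]
  exact (integral_congr_ae (Filter.Eventually.of_forall fun u => (h2 u).symm)).symm

lemma SphereAvgAux.integral_gauss_rot (a b : EuclideanSpace ℝ (Fin d)) (hab : ‖a‖ = ‖b‖) (k : ℕ) :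
    ∫ x : EuclideanSpace ℝ (Fin d), ⟪a, x⟫ ^ (2*k) * Real.exp (-‖x‖^2)
      = ∫ x : EuclideanSpace ℝ (Fin d), ⟪b, x⟫ ^ (2*k) * Real.exp (-‖x‖^2) := by
  let f := Submodule.reflection (ℝ ∙ (b - a))ᗮ
  have hfb : f b = a := Submodule.reflection_sub hab.symm
  have h := (f.measurePreserving).integral_comp f.toHomeomorph.measurableEmbedding
    (fun x : EuclideanSpace ℝ (Fin d) => ⟪a, x⟫ ^ (2*k) * Real.exp (-‖x‖^2))
  rw [← h]
  refine integral_congr_ae (Filter.Eventually.of_forall fun x => ?_)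
  simp only
  rw [show ⟪a, f x⟫ = ⟪b, x⟫ by rw [← hfb]; exact f.inner_map_map _ _, f.norm_map]


local notation "E" => EuclideanSpace ℝ (Fin d)
local notation "S" => Metric.sphere (0 : EuclideanSpace ℝ (Fin d)) 1

lemma SphereAvgAux.main (hd : 1 ≤ d)
    (σ : Measure S) [IsProbabilityMeasure σ]
    (hinv : ∀ f : E ≃ₗᵢ[ℝ] E, σ.map (sphereMap d f) = σ)
    (z : E) :
    ∫ u, Real.cos (∑ i, (u : E) i * z i) ∂σ =
      ∑' k : ℕ,
        (-1 : ℝ) ^ k * ‖z‖ ^ (2 * k) * Real.Gamma ((d : ℝ) / 2) /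
          (4 ^ k * (Nat.factorial k) * Real.Gamma ((k : ℝ) + d / 2)) := by
  classical
  set i0 : Fin d := ⟨0, hd⟩
  set e : E := EuclideanSpace.single i0 (1:ℝ) with he
  have hne : ‖e‖ = 1 := by rw [he, EuclideanSpace.norm_single, norm_one]
  have hus : ∀ u : S, ‖(u : E)‖ = 1 := fun u => by
    simpa using mem_sphere_zero_iff_norm.mp u.2
  -- the moments
  set M : ℕ → ℝ := fun n => ∫ u, ⟪(u : E), e⟫ ^ n ∂σ with hM
  -- integrability of continuous functions on the sphere
  have hSint : ∀ g : S → ℝ, Continuous g → Integrable g σ := fun g hg =>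
    integrableOn_univ.mp (hg.continuousOn.integrableOn_compact isCompact_univ)
  -- scaling: moments against arbitrary vectors
  have hSC : ∀ (n : ℕ) (x : E), ∫ u, ⟪(u : E), x⟫ ^ n ∂σ = ‖x‖ ^ n * M n := by
    intro n x
    by_cases hx : x = 0
    · subst hx
      by_cases hn : n = 0
      · subst hn; simp [hM]
      · simp [zero_pow hn, norm_zero]
    · have hxn : ‖x‖ ≠ 0 := norm_ne_zero_iff.mpr hx
      set b : E := ‖x‖⁻¹ • x with hb
      have hbn : ‖b‖ = 1 := by
        rw [hb, norm_smul, norm_inv, norm_norm, inv_mul_cancel₀ hxn]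
      have hxb : x = ‖x‖ • b := by
        rw [hb, smul_smul, mul_inv_cancel₀ hxn, one_smul]
      have h1 : ∀ u : S, ⟪(u : E), x⟫ ^ n = ‖x‖ ^ n * ⟪(u : E), b⟫ ^ n := by
        intro u
        rw [hxb, real_inner_smul_right, mul_pow]
        rw [← hxb]
      simp_rw [h1]
      rw [integral_const_mul]
      congr 1
      exact SphereAvgAux.integral_inner_rot σ hinv b e (by rw [hbn, hne]) (fun t => t ^ n)
        (continuous_pow n)
  -- the Gaussian computation identifying M (2k)
  have hMval : ∀ k : ℕ, M (2*k) = (2*k).factorial * Real.Gamma ((d:ℝ)/2)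
      / (4^k * k.factorial * Real.Gamma ((k:ℝ) + d/2)) := by
    intro k
    -- inner Gaussian integral is independent of the unit vector
    have hCk : ∀ u : S, ∫ x : E, ⟪(u : E), x⟫ ^ (2*k) * Real.exp (-‖x‖^2)
        = Real.Gamma ((k:ℝ)+1/2) * Real.sqrt π ^ (d-1) := by
      intro u
      rw [show (fun x : E => ⟪(u : E), x⟫ ^ (2*k) * Real.exp (-‖x‖^2))
          = fun x : E => ⟪(u : E), x⟫ ^ (2*k) * Real.exp (-‖x‖^2) from rfl]
      rw [SphereAvgAux.integral_gauss_rot (u : E) e (by rw [hus u, hne]) k]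
      rw [← SphereAvgAux.euclid_gauss_moment hd k]
      congr 1 with x
      rw [show ⟪e, x⟫ = x i0 by rw [he]; simp [EuclideanSpace.inner_single_left]]
    -- Fubini
    have hcont : Continuous (fun p : S × E => ⟪(p.1 : E), p.2⟫ ^ (2*k) * Real.exp (-‖p.2‖^2)) := by
      refine Continuous.mul ?_ ?_
      · exact ((continuous_subtype_val.comp continuous_fst).inner continuous_snd).pow _
      · exact Real.continuous_exp.comp ((continuous_snd.norm.pow 2).neg)
    have hbd : Integrable (fun p : S × E => (2^k * k.factorial : ℝ) * Real.exp (-(1/2) * ‖p.2‖^2))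
        (σ.prod volume) := by
      exact (integrable_const (μ := σ) _).mul_prod SphereAvgAux.gauss_half_integrable
    have hFint : Integrable (fun p : S × E => ⟪(p.1 : E), p.2⟫ ^ (2*k) * Real.exp (-‖p.2‖^2))
        (σ.prod volume) := by
      refine hbd.mono' hcont.aestronglyMeasurable
        (Filter.Eventually.of_forall fun p => ?_)
      have h1 : |⟪(p.1 : E), p.2⟫| ≤ ‖p.2‖ := by
        have := abs_real_inner_le_norm (p.1 : E) p.2
        rwa [hus p.1, one_mul] at this
      calc ‖⟪(p.1 : E), p.2⟫ ^ (2*k) * Real.exp (-‖p.2‖^2)‖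
          = |⟪(p.1 : E), p.2⟫| ^ (2*k) * Real.exp (-‖p.2‖^2) := by
            rw [norm_mul, norm_pow, Real.norm_eq_abs, Real.norm_eq_abs, Real.abs_exp]
        _ ≤ ‖p.2‖ ^ (2*k) * Real.exp (-‖p.2‖^2) := by gcongr
        _ ≤ 2^k * k.factorial * Real.exp (-(1/2) * ‖p.2‖^2) :=
            SphereAvgAux.poly_gauss_bound k ‖p.2‖
    have hswap := MeasureTheory.integral_integral_swap
      (f := fun (u : S) (x : E) => ⟪(u : E), x⟫ ^ (2*k) * Real.exp (-‖x‖^2)) hFint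
    -- evaluate both sides of hswap
    have hLHS : ∫ u : S, (∫ x : E, ⟪(u : E), x⟫ ^ (2*k) * Real.exp (-‖x‖^2)) ∂σ
        = Real.Gamma ((k:ℝ)+1/2) * Real.sqrt π ^ (d-1) := by
      rw [integral_congr_ae (Filter.Eventually.of_forall hCk)]
      simp [measure_univ]
    have hRHS : ∫ x : E, (∫ u : S, ⟪(u : E), x⟫ ^ (2*k) * Real.exp (-‖x‖^2) ∂σ)
        = M (2*k) * (((d : ℝ) * (volume (Metric.ball (0:E) 1)).toReal)
          * ((1/2) * Real.Gamma ((k:ℝ) + d/2))) := by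
      have hpt : ∀ x : E, (∫ u : S, ⟪(u : E), x⟫ ^ (2*k) * Real.exp (-‖x‖^2) ∂σ)
          = M (2*k) * (‖x‖ ^ (2*k) * Real.exp (-‖x‖^2)) := by
        intro x
        rw [integral_mul_const, hSC (2*k) x]
        ring
      rw [integral_congr_ae (Filter.Eventually.of_forall hpt), integral_const_mul,
        SphereAvgAux.euclid_gauss_radial hd k]
    rw [hLHS, hRHS] at hswap
    -- volume of the unit ball
    have hvol : (volume (Metric.ball (0:E) 1)).toReal
        = Real.sqrt π ^ d / Real.Gamma ((d:ℝ)/2 + 1) := by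
      have hnept : Nonempty (Fin d) := ⟨i0⟩
      rw [EuclideanSpace.volume_ball]
      rw [ENNReal.ofReal_one, one_pow, one_mul, Fintype.card_fin]
      rw [ENNReal.toReal_ofReal]
      positivity
    -- positivity facts
    have hΓd : 0 < Real.Gamma ((d:ℝ)/2) := Real.Gamma_pos_of_pos (by positivity)
    have hΓkd : 0 < Real.Gamma ((k:ℝ) + d/2) := Real.Gamma_pos_of_pos (by positivity)
    have hΓd1 : Real.Gamma ((d:ℝ)/2 + 1) = ((d:ℝ)/2) * Real.Gamma ((d:ℝ)/2) :=
      Real.Gamma_add_one (by positivity)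
    have hsπ : (0:ℝ) < Real.sqrt π := Real.sqrt_pos.mpr Real.pi_pos
    have hdpos : (0:ℝ) < d := by exact_mod_cast hd
    have hπd : Real.sqrt π ^ d = Real.sqrt π ^ (d-1) * Real.sqrt π := by
      conv_lhs => rw [show d = (d-1) + 1 from (Nat.succ_pred_eq_of_pos hd).symm]
      rw [pow_succ]
    rw [hvol, hΓd1, hπd] at hswap
    have hfk : (0:ℝ) < k.factorial := by positivity
    have h2kf : (0:ℝ) < (2*k).factorial := by positivity
    -- solve for M (2k)
    have hD : ((d:ℝ) * ((Real.sqrt π ^ (d-1) * Real.sqrt π) / ((d:ℝ)/2 * Real.Gamma ((d:ℝ)/2))))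
        * ((1/2) * Real.Gamma ((k:ℝ) + d/2)) ≠ 0 := by
      positivity
    have hM2k : M (2*k) = (Real.Gamma ((k:ℝ)+1/2) * Real.sqrt π ^ (d-1))
        / (((d:ℝ) * ((Real.sqrt π ^ (d-1) * Real.sqrt π) / ((d:ℝ)/2 * Real.Gamma ((d:ℝ)/2))))
          * ((1/2) * Real.Gamma ((k:ℝ) + d/2))) := by
      rw [eq_div_iff hD]
      exact hswap.symm
    rw [hM2k, SphereAvgAux.gamma_nat_add_half k]
    field_simp
  -- series expansion of cosine and interchange
  have hinner_z : ∀ u : S, Real.cos (∑ i, (u : E) i * z i) = Real.cos ⟪(u : E), z⟫ := by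
    intro u
    congr 1
    simp [PiLp.inner_apply, mul_comm]
  rw [integral_congr_ae (Filter.Eventually.of_forall hinner_z)]
  have hcos : ∀ u : S, Real.cos ⟪(u : E), z⟫
      = ∑' k : ℕ, (-1:ℝ)^k * ⟪(u : E), z⟫^(2*k) / (2*k).factorial := fun u =>
    ((Real.hasSum_cos _).tsum_eq).symm
  rw [integral_congr_ae (Filter.Eventually.of_forall hcos)]
  have hint : ∀ k : ℕ, Integrable
      (fun u : S => (-1:ℝ)^k * ⟪(u : E), z⟫^(2*k) / (2*k).factorial) σ := by
    intro k
    refine hSint _ ?_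
    exact ((continuous_const.mul
      ((continuous_subtype_val.inner continuous_const).pow _)).div_const _)
  have hsummable : Summable fun k : ℕ =>
      ∫ u, ‖(-1:ℝ)^k * ⟪(u : E), z⟫^(2*k) / (2*k).factorial‖ ∂σ := by
    refine Summable.of_nonneg_of_le (fun k => integral_nonneg fun u => norm_nonneg _)
      (fun k => ?_) (Real.summable_pow_div_factorial (‖z‖^2))
    have hb : ∀ u : S, ‖(-1:ℝ)^k * ⟪(u : E), z⟫^(2*k) / (2*k).factorial‖
        ≤ (‖z‖^2)^k / k.factorial := by
      intro u
      have h1 : |⟪(u : E), z⟫| ≤ ‖z‖ := by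
        have := abs_real_inner_le_norm (u : E) z
        rwa [hus u, one_mul] at this
      have h2 : |⟪(u : E), z⟫| ^ (2*k) ≤ ‖z‖ ^ (2*k) :=
        pow_le_pow_left₀ (abs_nonneg _) h1 _
      have h3 : (k.factorial : ℝ) ≤ (2*k).factorial := by
        exact_mod_cast Nat.factorial_le (Nat.le_mul_of_pos_left k two_pos)
      calc ‖(-1:ℝ)^k * ⟪(u : E), z⟫^(2*k) / (2*k).factorial‖
          = |⟪(u : E), z⟫|^(2*k) / (2*k).factorial := by
            rw [norm_div, norm_mul, norm_pow, norm_pow, Real.norm_eq_abs, Real.norm_eq_abs,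
              Real.norm_eq_abs, abs_neg, abs_one, one_pow, one_mul,
              Nat.abs_cast]
        _ ≤ ‖z‖^(2*k) / (2*k).factorial := by gcongr
        _ ≤ ‖z‖^(2*k) / k.factorial :=
            div_le_div_of_nonneg_left (by positivity) (by positivity) h3
        _ = (‖z‖^2)^k / k.factorial := by rw [← pow_mul]
    calc ∫ u, ‖(-1:ℝ)^k * ⟪(u : E), z⟫^(2*k) / (2*k).factorial‖ ∂σ
        ≤ ∫ _u : S, (‖z‖^2)^k / k.factorial ∂σ :=
          integral_mono (hint k).norm (integrable_const _) hb
      _ = (‖z‖^2)^k / k.factorial := by simp [measure_univ]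
  rw [← MeasureTheory.integral_tsum_of_summable_integral_norm hint hsummable]
  refine tsum_congr fun k => ?_
  have hre : ∀ u : S, (-1:ℝ)^k * ⟪(u : E), z⟫^(2*k) / (2*k).factorial
      = ((-1:ℝ)^k / (2*k).factorial) * ⟪(u : E), z⟫^(2*k) := fun u => by ring
  rw [integral_congr_ae (Filter.Eventually.of_forall hre), integral_const_mul,
    hSC (2*k) z, hMval k]
  have h2kf : ((2*k).factorial : ℝ) ≠ 0 := by positivity
  have hfk : (k.factorial : ℝ) ≠ 0 := by positivity
  have hΓkd : Real.Gamma ((k:ℝ) + d/2) ≠ 0 :=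
    (Real.Gamma_pos_of_pos (by positivity)).ne'
  field_simp

end Aux

/-- The spherical average of `cos⟨u, z⟩` (with respect to the uniform probability measure on
the unit sphere, characterized as a rotation-invariant Borel probability measure) equals the
Bessel-type power series `Σ_k (−1)^k ‖z‖^(2k) Γ(d/2) / (4^k k! Γ(k + d/2))`. -/
theorem sphere_average_cos (d : ℕ) (hd : 1 ≤ d)
    (σ : Measure (Metric.sphere (0 : EuclideanSpace ℝ (Fin d)) 1)) [IsProbabilityMeasure σ]
    (hinv : ∀ f : EuclideanSpace ℝ (Fin d) ≃ₗᵢ[ℝ] EuclideanSpace ℝ (Fin d),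
      σ.map (sphereMap d f) = σ)
    (z : EuclideanSpace ℝ (Fin d)) :
    ∫ u, Real.cos (∑ i, (u : EuclideanSpace ℝ (Fin d)) i * z i) ∂σ =
      ∑' k : ℕ,
        (-1 : ℝ) ^ k * ‖z‖ ^ (2 * k) * Real.Gamma ((d : ℝ) / 2) /
          (4 ^ k * (Nat.factorial k) * Real.Gamma ((k : ℝ) + d / 2)) :=
  SphereAvgAux.main hd σ hinv z

end
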